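/- Let X, Y be sets, μ and λ finitely additive probability measures on their power sets, R ⊆ X × Y, and ε > 0. Suppose there exist finite unions of rectangles P ⊆ R ⊆ Q such that (μ × λ)(Q) − (μ × λ)(P) < ε. Then there exist finite partitions P₁,…,Pₙ of X and Q₁,…,Q_m of Y into sets lying in the Boolean algebras generated by the sides of the rectangles, such that Σ μ(P_i)·λ(Q_j) < ε, where the sum is over all pairs (i,j) such that (P_i, Q_j) is not R-homogeneous. -/

import Mathlib

open scoped Classical

def IsSetAlg {X : Type*} (B : Set (Set X)) : Prop :=
  ∅ ∈ B ∧ (∀ A ∈ B, Aᶜ ∈ B) ∧ ∀ A ∈ B, ∀ C ∈ B, A ∪ C ∈ B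

def genAlg {X : Type*} (S : Set (Set X)) : Set (Set X) :=
  ⋂₀ {B | IsSetAlg B ∧ S ⊆ B}

def IsFAP {X : Type*} (m : Set X → ℝ) : Prop :=
  m Set.univ = 1 ∧ (∀ A, 0 ≤ m A) ∧
    ∀ A C : Set X, Disjoint A C → m (A ∪ C) = m A + m C

namespace Stmt5

variable {X Y : Type*} {μ : Set X → ℝ}

lemma fap_empty (h : IsFAP μ) : μ ∅ = 0 := by
  have := h.2.2 ∅ ∅ (by simp)
  simp at this
  linarith

lemma fap_mono (h : IsFAP μ) {A B : Set X} (hAB : A ⊆ B) : μ A ≤ μ B := by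
  have hB : B = A ∪ (B \ A) := by rw [Set.union_diff_cancel hAB]
  have hd : Disjoint A (B \ A) := Set.disjoint_left.mpr fun a ha h2 => h2.2 ha
  have := h.2.1 (B \ A)
  rw [hB, h.2.2 _ _ hd]
  linarith

lemma fap_le_one (h : IsFAP μ) (A : Set X) : μ A ≤ 1 := by
  have := fap_mono h (Set.subset_univ A)
  rw [h.1] at this
  exact this

lemma fap_biUnion (h : IsFAP μ) {ι : Type*} (t : Finset ι) (g : ι → Set X)
    (hd : ∀ i ∈ t, ∀ j ∈ t, i ≠ j → Disjoint (g i) (g j)) :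
    μ (⋃ i ∈ t, g i) = ∑ i ∈ t, μ (g i) := by
  induction t using Finset.induction_on with
  | empty => simp [fap_empty h]
  | @insert a s hx ih =>
    have hdis : Disjoint (g a) (⋃ i ∈ s, g i) := by
      rw [Set.disjoint_iUnion_right]
      intro i
      rw [Set.disjoint_iUnion_right]
      intro hi
      exact hd a (Finset.mem_insert_self a s) i (Finset.mem_insert_of_mem hi)
        (by rintro rfl; exact hx hi)
    rw [Finset.set_biUnion_insert, h.2.2 _ _ hdis, Finset.sum_insert hx,
      ih (fun i hi j hj hij => hd i (Finset.mem_insert_of_mem hi) j (Finset.mem_insert_of_mem hj) hij)]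

-- genAlg lemmas
lemma genAlg_mem_iff {S : Set (Set X)} {A : Set X} :
    A ∈ genAlg S ↔ ∀ B, IsSetAlg B → S ⊆ B → A ∈ B := by
  simp [genAlg, Set.mem_sInter, Set.mem_setOf_eq, and_imp]

lemma subset_genAlg (S : Set (Set X)) : S ⊆ genAlg S :=
  fun A hA => genAlg_mem_iff.mpr fun _ _ hS => hS hA

lemma genAlg_empty (S : Set (Set X)) : (∅ : Set X) ∈ genAlg S :=
  genAlg_mem_iff.mpr fun _ hB _ => hB.1

lemma genAlg_compl {S : Set (Set X)} {A : Set X} (hA : A ∈ genAlg S) : Aᶜ ∈ genAlg S :=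
  genAlg_mem_iff.mpr fun B hB hS => hB.2.1 A (genAlg_mem_iff.mp hA B hB hS)

lemma genAlg_union {S : Set (Set X)} {A C : Set X} (hA : A ∈ genAlg S) (hC : C ∈ genAlg S) :
    A ∪ C ∈ genAlg S :=
  genAlg_mem_iff.mpr fun B hB hS =>
    hB.2.2 A (genAlg_mem_iff.mp hA B hB hS) C (genAlg_mem_iff.mp hC B hB hS)

lemma genAlg_univ (S : Set (Set X)) : (Set.univ : Set X) ∈ genAlg S := by
  have := genAlg_compl (genAlg_empty S)
  simpa using this

lemma genAlg_inter {S : Set (Set X)} {A C : Set X} (hA : A ∈ genAlg S) (hC : C ∈ genAlg S) :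
    A ∩ C ∈ genAlg S := by
  have : A ∩ C = (Aᶜ ∪ Cᶜ)ᶜ := by simp [Set.compl_union]
  rw [this]
  exact genAlg_compl (genAlg_union (genAlg_compl hA) (genAlg_compl hC))

lemma genAlg_biInter {S : Set (Set X)} {ι : Type*} (t : Finset ι) (f : ι → Set X)
    (hf : ∀ i ∈ t, f i ∈ genAlg S) : (⋂ i ∈ t, f i) ∈ genAlg S := by
  induction t using Finset.induction_on with
  | empty => simpa using genAlg_univ S
  | @insert a s hx ih =>
    rw [Finset.set_biInter_insert]
    exact genAlg_inter (hf a (Finset.mem_insert_self a s))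
      (ih fun i hi => hf i (Finset.mem_insert_of_mem hi))

lemma genAlg_iInter {S : Set (Set X)} {ι : Type*} [Fintype ι] (f : ι → Set X)
    (hf : ∀ i, f i ∈ genAlg S) : (⋂ i, f i) ∈ genAlg S := by
  have : (⋂ i, f i) = ⋂ i ∈ Finset.univ, f i := by simp
  rw [this]
  exact genAlg_biInter _ _ fun i _ => hf i

-- atoms
def atomOf {ι : Type*} (C : ι → Set X) (s : ι → Bool) : Set X :=
  ⋂ i, (if s i then C i else (C i)ᶜ)

lemma mem_atomOf {ι : Type*} {C : ι → Set X} {s : ι → Bool} {x : X} :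
    x ∈ atomOf C s ↔ ∀ i, (x ∈ C i ↔ s i = true) := by
  simp only [atomOf, Set.mem_iInter]
  constructor
  · intro h i
    have := h i
    cases hs : s i <;> simp [hs] at this ⊢ <;> simp [this]
  · intro h i
    cases hs : s i <;> simp [hs] <;> have := (h i) <;> rw [hs] at this <;> simp at this <;> simp [this]

lemma mem_atomOf_sig {ι : Type*} (C : ι → Set X) (x : X) :
    x ∈ atomOf C (fun i => decide (x ∈ C i)) := by
  rw [mem_atomOf]
  intro i
  simp

lemma atomOf_eq_sig {ι : Type*} {C : ι → Set X} {s : ι → Bool} {x : X}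
    (hx : x ∈ atomOf C s) : s = fun i => decide (x ∈ C i) := by
  funext i
  have := (mem_atomOf.mp hx) i
  by_cases h : x ∈ C i
  · simp [h, this.mp h]
  · simp [h]
    cases hs : s i
    · rfl
    · exact absurd (this.mpr hs) h

lemma atomOf_disjoint {ι : Type*} {C : ι → Set X} {s t : ι → Bool} (hst : s ≠ t) :
    Disjoint (atomOf C s) (atomOf C t) := by
  rw [Set.disjoint_left]
  intro x hxs hxt
  exact hst ((atomOf_eq_sig hxs).trans (atomOf_eq_sig hxt).symm)

lemma atomOf_mem_genAlg {ι : Type*} [Fintype ι] {C : ι → Set X} {S : Set (Set X)}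
    (hC : ∀ i, C i ∈ S) (s : ι → Bool) : atomOf C s ∈ genAlg S := by
  apply genAlg_iInter
  intro i
  by_cases h : s i
  · simp only [h, if_true]
    exact subset_genAlg S (hC i)
  · simp only [h, if_false]
    exact genAlg_compl (subset_genAlg S (hC i))


def cellOf (S T : Finset (Set X)) : Set X := {x | ∀ A ∈ S, (x ∈ A ↔ A ∈ T)}

lemma cellOf_disjoint {S T T' : Finset (Set X)} (hT : T ∈ S.powerset) (hT' : T' ∈ S.powerset)
    (hne : T ≠ T') : Disjoint (cellOf S T) (cellOf S T') := by
  rw [Set.disjoint_left]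
  intro x hx hx'
  apply hne
  ext A
  by_cases hA : A ∈ S
  · rw [← hx A hA, ← hx' A hA]
  · constructor
    · intro h; exact absurd (Finset.mem_powerset.mp hT h) hA
    · intro h; exact absurd (Finset.mem_powerset.mp hT' h) hA

lemma mem_cellOf_filter (S : Finset (Set X)) (x : X) :
    x ∈ cellOf S (S.filter (fun A => x ∈ A)) := by
  intro A hA
  simp [Finset.mem_filter, hA]

noncomputable def valAt (f : X → ℝ) (a : Set X) : ℝ :=
  if h : a.Nonempty then f h.choose else 0

lemma valAt_add (f g : X → ℝ) (a : Set X) :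
    valAt (fun x => f x + g x) a = valAt f a + valAt g a := by
  unfold valAt
  split <;> simp

lemma valAt_nonneg {f : X → ℝ} (hf : ∀ x, 0 ≤ f x) (a : Set X) : 0 ≤ valAt f a := by
  unfold valAt; split
  · exact hf _
  · exact le_refl 0

noncomputable def rsum (μ : Set X → ℝ) (S : Finset (Set X)) (f : X → ℝ) : ℝ :=
  ∑ T ∈ S.powerset, μ (cellOf S T) * valAt f (cellOf S T)

lemma rsum_add (S : Finset (Set X)) (f g : X → ℝ) :
    rsum μ S (fun x => f x + g x) = rsum μ S f + rsum μ S g := by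
  unfold rsum
  rw [← Finset.sum_add_distrib]
  apply Finset.sum_congr rfl
  intro T _
  rw [valAt_add]; ring

lemma rsum_nonneg (h : IsFAP μ) (S : Finset (Set X)) {f : X → ℝ} (hf : ∀ x, 0 ≤ f x) :
    0 ≤ rsum μ S f := by
  apply Finset.sum_nonneg
  intro T _
  exact mul_nonneg (h.2.1 _) (valAt_nonneg hf _)

lemma cell_union_univ (S : Finset (Set X)) :
    (⋃ T ∈ S.powerset, cellOf S T) = Set.univ := by
  ext x
  simp only [Set.mem_iUnion, Set.mem_univ, iff_true]
  exact ⟨S.filter (fun A => x ∈ A), Finset.mem_powerset.mpr (Finset.filter_subset _ _),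
    mem_cellOf_filter S x⟩

lemma sum_cell_eq_one (h : IsFAP μ) (S : Finset (Set X)) :
    ∑ T ∈ S.powerset, μ (cellOf S T) = 1 := by
  rw [← fap_biUnion h _ _ (fun T hT T' hT' hne => cellOf_disjoint hT hT' hne),
    cell_union_univ, h.1]

lemma rsum_le_one (h : IsFAP μ) (S : Finset (Set X)) {f : X → ℝ} (hf : ∀ x, f x ≤ 1) :
    rsum μ S f ≤ 1 := by
  calc rsum μ S f ≤ ∑ T ∈ S.powerset, μ (cellOf S T) := by
        apply Finset.sum_le_sum
        intro T _
        by_cases hne : (cellOf S T).Nonempty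
        · calc μ (cellOf S T) * valAt f (cellOf S T) ≤ μ (cellOf S T) * 1 := by
                apply mul_le_mul_of_nonneg_left _ (h.2.1 _)
                unfold valAt
                rw [dif_pos hne]
                exact hf _
            _ = μ (cellOf S T) := mul_one _
        · rw [Set.not_nonempty_iff_eq_empty] at hne
          rw [hne, fap_empty h]
          simp
    _ = 1 := sum_cell_eq_one h S

lemma rsum_const_one (h : IsFAP μ) (S : Finset (Set X)) :
    rsum μ S (fun _ => (1:ℝ)) = 1 := by
  have heq : rsum μ S (fun _ => (1:ℝ)) = ∑ T ∈ S.powerset, μ (cellOf S T) := by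
    apply Finset.sum_congr rfl
    intro T _
    by_cases hne : (cellOf S T).Nonempty
    · unfold valAt
      rw [dif_pos hne]
      simp
    · rw [Set.not_nonempty_iff_eq_empty] at hne
      rw [hne, fap_empty h]
      simp
  rw [heq, sum_cell_eq_one h S]

lemma cell_union_eq (h : IsFAP μ) (S : Finset (Set X)) {A : Set X} (hA : A ∈ S) :
    (⋃ T ∈ S.powerset.filter (fun T => A ∈ T), cellOf S T) = A := by
  ext x
  simp only [Set.mem_iUnion, Finset.mem_filter, Finset.mem_powerset]
  constructor
  · rintro ⟨T, ⟨hTS, hAT⟩, hx⟩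
    exact (hx A hA).mpr hAT
  · intro hx
    exact ⟨S.filter (fun B => x ∈ B), ⟨Finset.filter_subset _ _, by simp [Finset.mem_filter, hA, hx]⟩,
      mem_cellOf_filter S x⟩

lemma rsum_indicator (h : IsFAP μ) (S : Finset (Set X)) {A : Set X} (hA : A ∈ S) (c : ℝ) :
    rsum μ S (fun x => if x ∈ A then c else 0) = c * μ A := by
  have key : ∀ T ∈ S.powerset,
      μ (cellOf S T) * valAt (fun x => if x ∈ A then c else 0) (cellOf S T)
        = if A ∈ T then c * μ (cellOf S T) else 0 := by
    intro T hT
    by_cases hne : (cellOf S T).Nonempty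
    · unfold valAt
      rw [dif_pos hne]
      have hpt := hne.choose_spec
      have hiff : hne.choose ∈ A ↔ A ∈ T := hpt A hA
      show μ (cellOf S T) * (if hne.choose ∈ A then c else 0) = _
      by_cases hAT : A ∈ T
      · rw [if_pos (hiff.mpr hAT), if_pos hAT]; ring
      · rw [if_neg (fun hxa => hAT (hiff.mp hxa)), if_neg hAT]; ring
    · rw [Set.not_nonempty_iff_eq_empty] at hne
      rw [hne, fap_empty h]
      simp
  rw [rsum, Finset.sum_congr rfl key]
  have : (∑ T ∈ S.powerset, if A ∈ T then c * μ (cellOf S T) else 0)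
      = ∑ T ∈ S.powerset.filter (fun T => A ∈ T), c * μ (cellOf S T) :=
    (Finset.sum_filter _ _).symm
  rw [this, ← Finset.mul_sum]
  congr 1
  conv_rhs => rw [← cell_union_eq h S hA]
  refine (fap_biUnion h _ _ ?_).symm
  intro T hT T' hT' hne
  exact cellOf_disjoint (Finset.mem_of_mem_filter T hT) (Finset.mem_of_mem_filter T' hT') hne


lemma exists_prod_fap {X Y : Type*} (μ : Set X → ℝ) (l : Set Y → ℝ)
    (hμ : IsFAP μ) (hl : IsFAP l) :
    ∃ ω : Set (X × Y) → ℝ, IsFAP ω ∧ ∀ (A : Set X) (B : Set Y), ω (A ×ˢ B) = μ A * l B := by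
  -- section function
  set g : Set (X × Y) → Finset (Set X) → ℝ :=
    fun E S => rsum μ S (fun x => l {y | (x, y) ∈ E}) with hg
  have hl0 : ∀ (B : Set Y), 0 ≤ l B := hl.2.1
  have hl1 : ∀ (B : Set Y), l B ≤ 1 := fap_le_one hl
  have hbound : ∀ E S, g E S ∈ Set.Icc (0:ℝ) 1 := by
    intro E S
    exact ⟨rsum_nonneg hμ S (fun x => hl0 _), rsum_le_one hμ S (fun x => hl1 _)⟩
  let U : Ultrafilter (Finset (Set X)) := Ultrafilter.of Filter.atTop
  have hUle : (U : Filter (Finset (Set X))) ≤ Filter.atTop := Ultrafilter.of_le Filter.atTop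
  set ω : Set (X × Y) → ℝ := fun E => Filter.limUnder (U : Filter (Finset (Set X))) (g E) with hω
  have htends : ∀ E, Filter.Tendsto (g E) (U : Filter (Finset (Set X))) (nhds (ω E)) := by
    intro E
    obtain ⟨a, _, ha⟩ := (isCompact_Icc (a := (0:ℝ)) (b := 1)).ultrafilter_le_nhds
      (U.map (g E)) (by
        rw [Ultrafilter.coe_map, Filter.le_principal_iff, Filter.mem_map]
        have : (g E) ⁻¹' (Set.Icc (0:ℝ) 1) = Set.univ := by
          ext S; simp [hbound E S]
        rw [this]
        exact Filter.univ_mem)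
    rw [Ultrafilter.coe_map] at ha
    have hT : Filter.Tendsto (g E) (U : Filter (Finset (Set X))) (nhds a) := ha
    have : ω E = a := by rw [hω]; exact hT.limUnder_eq
    rw [this]
    exact hT
  refine ⟨ω, ⟨?_, ?_, ?_⟩, ?_⟩
  · -- ω univ = 1
    have hconst : ∀ S, g Set.univ S = 1 := by
      intro S
      have : (fun x : X => l {y | (x, y) ∈ (Set.univ : Set (X × Y))}) = fun _ => (1:ℝ) := by
        funext x
        have : {y | (x, y) ∈ (Set.univ : Set (X × Y))} = (Set.univ : Set Y) := by simp
        rw [this, hl.1]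
      rw [hg]
      simp only []
      rw [this]
      exact rsum_const_one hμ S
    have : Filter.Tendsto (g Set.univ) (U : Filter (Finset (Set X))) (nhds 1) := by
      rw [show g Set.univ = (fun _ => (1:ℝ)) from funext hconst]
      exact tendsto_const_nhds
    rw [hω]; exact this.limUnder_eq
  · -- nonneg
    intro E
    exact ge_of_tendsto' (htends E) (fun S => (hbound E S).1)
  · -- additive
    intro E F hEF
    have hsec : ∀ x : X, {y | (x, y) ∈ E ∪ F} = {y | (x, y) ∈ E} ∪ {y | (x, y) ∈ F} := by
      intro x; ext y; simp [Set.mem_union]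
    have hsecd : ∀ x : X, Disjoint {y | (x, y) ∈ E} {y | (x, y) ∈ F} := by
      intro x
      rw [Set.disjoint_left]
      intro y h1 h2
      exact Set.disjoint_left.mp hEF h1 h2
    have hadd : g (E ∪ F) = fun S => g E S + g F S := by
      funext S
      rw [hg]
      simp only []
      have : (fun x : X => l {y | (x, y) ∈ E ∪ F})
          = fun x => l {y | (x, y) ∈ E} + l {y | (x, y) ∈ F} := by
        funext x
        rw [hsec x, hl.2.2 _ _ (hsecd x)]
      rw [this]
      exact rsum_add S _ _
    have : Filter.Tendsto (g (E ∪ F)) (U : Filter (Finset (Set X))) (nhds (ω E + ω F)) := by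
      rw [hadd]
      exact (htends E).add (htends F)
    rw [hω]; exact this.limUnder_eq
  · -- product
    intro A B
    have hev : ∀ S : Finset (Set X), {A} ≤ S → g (A ×ˢ B) S = l B * μ A := by
      intro S hS
      have hAS : A ∈ S := Finset.singleton_subset_iff.mp hS
      have : (fun x : X => l {y | (x, y) ∈ A ×ˢ B}) = fun x => if x ∈ A then l B else 0 := by
        funext x
        by_cases hx : x ∈ A
        · have : {y | (x, y) ∈ A ×ˢ B} = B := by ext y; simp [hx]
          rw [this, if_pos hx]
        · have : {y | (x, y) ∈ A ×ˢ B} = (∅ : Set Y) := by ext y; simp [hx]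
          rw [this, if_neg hx, fap_empty hl]
      rw [hg]
      simp only []
      rw [this]
      exact rsum_indicator hμ S hAS (l B)
    have hevU : ∀ᶠ S in (U : Filter (Finset (Set X))), g (A ×ˢ B) S = l B * μ A :=
      hUle (Filter.eventually_atTop.mpr ⟨{A}, hev⟩)
    have : Filter.Tendsto (g (A ×ˢ B)) (U : Filter (Finset (Set X))) (nhds (l B * μ A)) :=
      Filter.Tendsto.congr' (Filter.EventuallyEq.symm hevU) tendsto_const_nhds
    have hval : ω (A ×ˢ B) = l B * μ A := by rw [hω]; exact this.limUnder_eq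
    rw [hval, mul_comm]

lemma rect_disjoint {A A' : Set X} {B B' : Set Y} (h : Disjoint A A' ∨ Disjoint B B') :
    Disjoint (A ×ˢ B) (A' ×ˢ B') := by
  rw [Set.disjoint_left]
  rintro ⟨x, y⟩ ⟨hx, hy⟩ ⟨hx', hy'⟩
  cases h with
  | inl h => exact Set.disjoint_left.mp h hx hx'
  | inr h => exact Set.disjoint_left.mp h hy hy'

lemma atom_rect_subset {ι κ : Type*} {C : ι → Set X} {D : κ → Set Y}
    {s : ι → Bool} {t : κ → Bool} {N : ℕ} {f : Fin N → ι} {g : Fin N → κ}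
    {V : Set (X × Y)} (hV : V = ⋃ k, C (f k) ×ˢ D (g k))
    (hne : ((atomOf C s ×ˢ atomOf D t) ∩ V).Nonempty) :
    atomOf C s ×ˢ atomOf D t ⊆ V := by
  obtain ⟨⟨x, y⟩, hmem, hVmem⟩ := hne
  rw [hV] at hVmem ⊢
  obtain ⟨k, hk⟩ : ∃ k, (x, y) ∈ C (f k) ×ˢ D (g k) := by
    simpa using hVmem
  rintro ⟨x', y'⟩ ⟨hx', hy'⟩
  apply Set.mem_iUnion.mpr ⟨k, ?_⟩
  refine ⟨?_, ?_⟩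
  · exact (mem_atomOf.mp hx' (f k)).mpr ((mem_atomOf.mp hmem.1 (f k)).mp hk.1)
  · exact (mem_atomOf.mp hy' (g k)).mpr ((mem_atomOf.mp hmem.2 (g k)).mp hk.2)


end Stmt5

theorem stmt_5 {X Y : Type*} (μ : Set X → ℝ) (l : Set Y → ℝ)
    (hμ : IsFAP μ) (hl : IsFAP l) (R : Set (X × Y)) (ε : ℝ) (hε : 0 < ε)
    (nP nQ : ℕ) (AP : Fin nP → Set X) (BP : Fin nP → Set Y)
    (AQ : Fin nQ → Set X) (BQ : Fin nQ → Set Y)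
    (P Q : Set (X × Y))
    (hPdef : P = ⋃ i, AP i ×ˢ BP i) (hQdef : Q = ⋃ j, AQ j ×ˢ BQ j)
    (hPR : P ⊆ R) (hRQ : R ⊆ Q)
    (hgap : ∀ ω : Set (X × Y) → ℝ, IsFAP ω →
      (∀ (A : Set X) (B : Set Y), ω (A ×ˢ B) = μ A * l B) → ω Q - ω P < ε) :
    ∃ (n m : ℕ) (Pp : Fin n → Set X) (Qq : Fin m → Set Y),
      (∀ x : X, ∃! i, x ∈ Pp i) ∧ (∀ y : Y, ∃! j, y ∈ Qq j) ∧
      (∀ i, Pp i ∈ genAlg (Set.range AP ∪ Set.range AQ)) ∧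
      (∀ j, Qq j ∈ genAlg (Set.range BP ∪ Set.range BQ)) ∧
      (∑ i : Fin n, ∑ j : Fin m,
          (if ¬(Pp i ×ˢ Qq j ⊆ R ∨ Disjoint (Pp i ×ˢ Qq j) R)
            then μ (Pp i) * l (Qq j) else 0)) < ε := by
  classical
  obtain ⟨ω, hω, hωprod⟩ := Stmt5.exists_prod_fap μ l hμ hl
  set C : (Fin nP ⊕ Fin nQ) → Set X := Sum.elim AP AQ with hC
  set D : (Fin nP ⊕ Fin nQ) → Set Y := Sum.elim BP BQ with hD
  set n := Fintype.card ((Fin nP ⊕ Fin nQ) → Bool) with hn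
  set e : ((Fin nP ⊕ Fin nQ) → Bool) ≃ Fin n := Fintype.equivFin _ with he
  set Pp : Fin n → Set X := fun i => Stmt5.atomOf C (e.symm i) with hPp
  set Qq : Fin n → Set Y := fun j => Stmt5.atomOf D (e.symm j) with hQq
  have hpartX : ∀ x : X, ∃! i, x ∈ Pp i := by
    intro x
    refine ⟨e (fun i => decide (x ∈ C i)), ?_, ?_⟩
    · show x ∈ Stmt5.atomOf C (e.symm (e _))
      rw [Equiv.symm_apply_apply]
      exact Stmt5.mem_atomOf_sig C x
    · intro i hi
      have hsig : e.symm i = fun k => decide (x ∈ C k) := Stmt5.atomOf_eq_sig hi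
      rw [← hsig, Equiv.apply_symm_apply]
  have hpartY : ∀ y : Y, ∃! j, y ∈ Qq j := by
    intro y
    refine ⟨e (fun j => decide (y ∈ D j)), ?_, ?_⟩
    · show y ∈ Stmt5.atomOf D (e.symm (e _))
      rw [Equiv.symm_apply_apply]
      exact Stmt5.mem_atomOf_sig D y
    · intro j hj
      have hsig : e.symm j = fun k => decide (y ∈ D k) := Stmt5.atomOf_eq_sig hj
      rw [← hsig, Equiv.apply_symm_apply]
  refine ⟨n, n, Pp, Qq, hpartX, hpartY, ?_, ?_, ?_⟩
  · intro i
    exact Stmt5.atomOf_mem_genAlg (fun k => by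
      cases k with
      | inl p => exact Or.inl ⟨p, rfl⟩
      | inr q => exact Or.inr ⟨q, rfl⟩) _
  · intro j
    exact Stmt5.atomOf_mem_genAlg (fun k => by
      cases k with
      | inl p => exact Or.inl ⟨p, rfl⟩
      | inr q => exact Or.inr ⟨q, rfl⟩) _
  · -- the sum bound
    have hPQ : P ⊆ Q := hPR.trans hRQ
    have hQ' : Q = ⋃ k, C (Sum.inr k) ×ˢ D (Sum.inr k) := hQdef
    have hP' : P = ⋃ k, C (Sum.inl k) ×ˢ D (Sum.inl k) := hPdef
    have hQdich : ∀ i j : Fin n, ((Pp i ×ˢ Qq j) ∩ Q).Nonempty → Pp i ×ˢ Qq j ⊆ Q := by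
      intro i j hne
      exact Stmt5.atom_rect_subset hQ' hne
    have hPdich : ∀ i j : Fin n, ((Pp i ×ˢ Qq j) ∩ P).Nonempty → Pp i ×ˢ Qq j ⊆ P := by
      intro i j hne
      exact Stmt5.atom_rect_subset hP' hne
    set FQ : Finset (Fin n × Fin n) :=
      Finset.univ.filter (fun p => Pp p.1 ×ˢ Qq p.2 ⊆ Q) with hFQ
    set FP : Finset (Fin n × Fin n) :=
      Finset.univ.filter (fun p => Pp p.1 ×ˢ Qq p.2 ⊆ P) with hFP
    have hrectd : ∀ p ∈ (Finset.univ : Finset (Fin n × Fin n)),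
        ∀ p' ∈ (Finset.univ : Finset (Fin n × Fin n)), p ≠ p' →
        Disjoint (Pp p.1 ×ˢ Qq p.2) (Pp p'.1 ×ˢ Qq p'.2) := by
      intro p _ p' _ hne
      by_cases h1 : p.1 = p'.1
      · have h2 : p.2 ≠ p'.2 := by
          intro h2
          exact hne (Prod.ext h1 h2)
        exact Stmt5.rect_disjoint (Or.inr (Stmt5.atomOf_disjoint (fun hs => h2 (e.symm.injective hs))))
      · exact Stmt5.rect_disjoint (Or.inl (Stmt5.atomOf_disjoint (fun hs => h1 (e.symm.injective hs))))
    have hQeq : Q = ⋃ p ∈ FQ, Pp p.1 ×ˢ Qq p.2 := by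
      apply Set.Subset.antisymm
      · rintro ⟨x, y⟩ hxy
        obtain ⟨i, hi, _⟩ := hpartX x
        obtain ⟨j, hj, _⟩ := hpartY y
        have hsub : Pp i ×ˢ Qq j ⊆ Q := hQdich i j ⟨(x, y), ⟨hi, hj⟩, hxy⟩
        have hmemF : (i, j) ∈ FQ := by
          rw [hFQ]
          simp only [Finset.mem_filter, Finset.mem_univ, true_and]
          exact hsub
        exact Set.mem_biUnion hmemF (show (x, y) ∈ Pp (i, j).1 ×ˢ Qq (i, j).2 from ⟨hi, hj⟩)
      · apply Set.iUnion₂_subset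
        intro p hp
        rw [hFQ] at hp
        simpa using (Finset.mem_filter.mp hp).2
    have hPeq : P = ⋃ p ∈ FP, Pp p.1 ×ˢ Qq p.2 := by
      apply Set.Subset.antisymm
      · rintro ⟨x, y⟩ hxy
        obtain ⟨i, hi, _⟩ := hpartX x
        obtain ⟨j, hj, _⟩ := hpartY y
        have hsub : Pp i ×ˢ Qq j ⊆ P := hPdich i j ⟨(x, y), ⟨hi, hj⟩, hxy⟩
        have hmemF : (i, j) ∈ FP := by
          rw [hFP]
          simp only [Finset.mem_filter, Finset.mem_univ, true_and]
          exact hsub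
        exact Set.mem_biUnion hmemF (show (x, y) ∈ Pp (i, j).1 ×ˢ Qq (i, j).2 from ⟨hi, hj⟩)
      · apply Set.iUnion₂_subset
        intro p hp
        rw [hFP] at hp
        simpa using (Finset.mem_filter.mp hp).2
    have hωQ : ω Q = ∑ p ∈ FQ, μ (Pp p.1) * l (Qq p.2) := by
      conv_lhs => rw [hQeq]
      rw [Stmt5.fap_biUnion hω FQ _ (fun p hp p' hp' hne => hrectd p (Finset.mem_univ p) p' (Finset.mem_univ p') hne)]
      exact Finset.sum_congr rfl (fun p _ => hωprod _ _)
    have hωP : ω P = ∑ p ∈ FP, μ (Pp p.1) * l (Qq p.2) := by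
      conv_lhs => rw [hPeq]
      rw [Stmt5.fap_biUnion hω FP _ (fun p hp p' hp' hne => hrectd p (Finset.mem_univ p) p' (Finset.mem_univ p') hne)]
      exact Finset.sum_congr rfl (fun p _ => hωprod _ _)
    have hgapω := hgap ω hω hωprod
    have hFPQ : FP ⊆ FQ := by
      intro p hp
      rw [hFP] at hp
      rw [hFQ]
      simp only [Finset.mem_filter, Finset.mem_univ, true_and] at hp ⊢
      exact hp.trans hPQ
    have hvnonneg : ∀ p : Fin n × Fin n, 0 ≤ μ (Pp p.1) * l (Qq p.2) :=
      fun p => mul_nonneg (hμ.2.1 _) (hl.2.1 _)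
    set NH : Finset (Fin n × Fin n) :=
      Finset.univ.filter (fun p => ¬(Pp p.1 ×ˢ Qq p.2 ⊆ R ∨ Disjoint (Pp p.1 ×ˢ Qq p.2) R))
      with hNH
    have hNHsub : NH ⊆ FQ \ FP := by
      intro p hp
      rw [hNH] at hp
      simp only [Finset.mem_filter, Finset.mem_univ, true_and] at hp
      push_neg at hp
      obtain ⟨hnR, hndis⟩ := hp
      obtain ⟨z, hz1, hz2⟩ := Set.not_disjoint_iff.mp hndis
      rw [Finset.mem_sdiff]
      constructor
      · rw [hFQ]
        simp only [Finset.mem_filter, Finset.mem_univ, true_and]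
        exact hQdich _ _ ⟨z, hz1, hRQ hz2⟩
      · rw [hFP]
        simp only [Finset.mem_filter, Finset.mem_univ, true_and]
        intro hsub
        exact hnR (hsub.trans hPR)
    have hsum1 : (∑ i : Fin n, ∑ j : Fin n,
        (if ¬(Pp i ×ˢ Qq j ⊆ R ∨ Disjoint (Pp i ×ˢ Qq j) R)
          then μ (Pp i) * l (Qq j) else 0))
        = ∑ p ∈ NH, μ (Pp p.1) * l (Qq p.2) := by
      rw [hNH, Finset.sum_filter, ← Finset.sum_product']
      rfl
    rw [hsum1]
    calc ∑ p ∈ NH, μ (Pp p.1) * l (Qq p.2)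
        ≤ ∑ p ∈ FQ \ FP, μ (Pp p.1) * l (Qq p.2) :=
          Finset.sum_le_sum_of_subset_of_nonneg hNHsub (fun p _ _ => hvnonneg p)
      _ = ω Q - ω P := by
          rw [hωQ, hωP, ← Finset.sum_sdiff hFPQ]
          ring
      _ < ε := hgapω
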